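/- For infinitely many integers n there exists an oriented graph G on n vertices with minimum semidegree δ⁰(G) = ⌊2n/5⌋ containing a vertex u that does not lie on any 3-cycle of G. -/

import Mathlib

/-- An oriented graph: a digraph (relation) with no loops and no pair of
antiparallel edges. -/
def IsOrientedGraph {V : Type*} (E : V → V → Prop) : Prop :=
  ∀ x y, E x y → ¬ E y x

/-- The outdegree `d⁺(x)` of a vertex. -/
noncomputable def outDeg {V : Type*} (E : V → V → Prop) (x : V) : ℕ :=
  Nat.card {y // E x y}

/-- The indegree `d⁻(x)` of a vertex. -/
noncomputable def inDeg {V : Type*} (E : V → V → Prop) (x : V) : ℕ :=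
  Nat.card {y // E y x}

/-- The minimum semidegree `δ⁰(G) = min over x of min (d⁺(x), d⁻(x))`. -/
noncomputable def minSemidegree {V : Type*} (E : V → V → Prop) : ℕ :=
  sInf (Set.range fun x => min (outDeg E x) (inDeg E x))

/-- The minimum outdegree `δ⁺(G)`. -/
noncomputable def minOutdegree {V : Type*} (E : V → V → Prop) : ℕ :=
  sInf (Set.range fun x => outDeg E x)

/-- `G` contains a directed cycle of length `ℓ`: distinct vertices
`v₀, …, v_{ℓ-1}` (indexed cyclically) with all consecutive edges present. -/
def HasCycle {V : Type*} (E : V → V → Prop) (ℓ : ℕ) : Prop :=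
  ∃ v : ZMod ℓ → V, Function.Injective v ∧ ∀ i, E (v i) (v (i + 1))

/-- `G` contains a directed `ℓ`-cycle through the vertex `u`. -/
def HasCycleThrough {V : Type*} (E : V → V → Prop) (ℓ : ℕ) (u : V) : Prop :=
  ∃ v : ZMod ℓ → V, Function.Injective v ∧ (∀ i, E (v i) (v (i + 1))) ∧ ∃ i, v i = u

namespace NoTri

instance zne (m : ℕ) : NeZero (2 * m + 1) := ⟨by omega⟩

/-- The edge relation of a regular tournament on `ZMod (2m+1)`. -/
def T (m : ℕ) (i j : ZMod (2*m+1)) : Prop := 1 ≤ (j - i).val ∧ (j - i).val ≤ m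

/-- The vertex set: `none` is the special vertex `u`; then the classes `A`, `B`, `C`. -/
abbrev W (m : ℕ) := Option (ZMod (2*m+1) ⊕ ZMod (2*m+1) ⊕ Fin (m + 1))

/-- The edge relation: `u → A`, `B → u`, `B → A`, `A → C`, `C → B`,
regular tournaments inside `A` and `B`, and `C` independent. -/
def E' (m : ℕ) : W m → W m → Prop
  | none, some (.inl _) => True
  | some (.inr (.inl _)), none => True
  | some (.inr (.inl _)), some (.inl _) => True
  | some (.inl _), some (.inr (.inr _)) => True
  | some (.inr (.inr _)), some (.inr (.inl _)) => True
  | some (.inl i), some (.inl j) => T m i j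
  | some (.inr (.inl i)), some (.inr (.inl j)) => T m i j
  | _, _ => False

lemma T_asymm (m : ℕ) {i j : ZMod (2*m+1)} (h : T m i j) (h' : T m j i) : False := by
  obtain ⟨h1, h2⟩ := h
  obtain ⟨h3, h4⟩ := h'
  have hv : i - j = -(j - i) := by ring
  have hne : (j - i) ≠ 0 := by
    intro hz; rw [hz, ZMod.val_zero] at h1; omega
  rw [hv, ZMod.neg_val, if_neg hne] at h3 h4
  have := ZMod.val_lt (j - i)
  omega

lemma E'_oriented (m : ℕ) : IsOrientedGraph (E' m) := by
  rintro (_ | (a | b | c)) (_ | (a' | b' | c')) h h' <;>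
    first
      | exact h
      | exact h'
      | exact T_asymm m h h'

/-- A subtype of an option type whose predicate fails at `none`. -/
def subtypeOptionEquiv {α : Type*} {p : Option α → Prop} (h : ¬ p none) :
    {y : Option α // p y} ≃ {a : α // p (some a)} where
  toFun y := ⟨Option.get y.1 (by rcases y with ⟨_ | a, hy⟩; exacts [absurd hy h, rfl]),
    by rcases y with ⟨_ | a, hy⟩; exacts [absurd hy h, hy]⟩
  invFun a := ⟨some a.1, a.2⟩
  left_inv := by rintro ⟨_ | a, hy⟩; exacts [absurd hy h, rfl]
  right_inv := fun a => rfl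

lemma card_true (α : Type*) [Finite α] : Nat.card {_a : α // True} = Nat.card α :=
  Nat.card_congr (Equiv.subtypeUnivEquiv fun _ => trivial)

lemma card_false (α : Type*) : Nat.card {_a : α // False} = 0 := by
  have : IsEmpty {_a : α // False} := ⟨fun x => x.2⟩
  exact Nat.card_of_isEmpty

lemma card_W {m : ℕ} (p : W m → Prop) (h : ¬ p none) :
    Nat.card {y // p y} =
      Nat.card {a : ZMod (2*m+1) // p (some (.inl a))} +
      Nat.card {b : ZMod (2*m+1) // p (some (.inr (.inl b)))} +
      Nat.card {c : Fin (m+1) // p (some (.inr (.inr c)))} := by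
  rw [Nat.card_congr (subtypeOptionEquiv h), Nat.card_congr Equiv.subtypeSum, Nat.card_sum,
    Nat.card_congr (Equiv.subtypeSum (p := fun x => p (some (Sum.inr x)))), Nat.card_sum]
  ring

lemma card_D (m : ℕ) : Nat.card {d : ZMod (2*m+1) // 1 ≤ d.val ∧ d.val ≤ m} = m := by
  have e : {d : ZMod (2*m+1) // 1 ≤ d.val ∧ d.val ≤ m} ≃ Fin m :=
    { toFun := fun d => ⟨d.1.val - 1, by obtain ⟨h1, h2⟩ := d.2; omega⟩
      invFun := fun k => ⟨((k : ℕ) + 1 : ℕ), by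
        rw [ZMod.val_cast_of_lt (by omega : (k : ℕ) + 1 < 2*m+1)]; omega⟩
      left_inv := fun d => by
        apply Subtype.ext
        have h1 := d.2.1
        have : (d.1.val - 1 + 1 : ℕ) = d.1.val := by omega
        simp only [this]
        exact ZMod.natCast_zmod_val d.1
      right_inv := fun k => by
        apply Fin.ext
        simp only [ZMod.val_cast_of_lt (by omega : (k : ℕ) + 1 < 2*m+1)]; omega }
  rw [Nat.card_congr e, Nat.card_eq_fintype_card, Fintype.card_fin]

lemma card_T_out (m : ℕ) (i : ZMod (2*m+1)) : Nat.card {j // T m i j} = m := by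
  rw [Nat.card_congr ((Equiv.subRight i).subtypeEquiv (fun j => Iff.rfl) :
    {j // T m i j} ≃ {d : ZMod (2*m+1) // 1 ≤ d.val ∧ d.val ≤ m})]
  exact card_D m

lemma card_T_in (m : ℕ) (i : ZMod (2*m+1)) : Nat.card {j // T m j i} = m := by
  rw [Nat.card_congr ((Equiv.subLeft i).subtypeEquiv (fun j => Iff.rfl) :
    {j // T m j i} ≃ {d : ZMod (2*m+1) // 1 ≤ d.val ∧ d.val ≤ m})]
  exact card_D m

lemma card_zm (m : ℕ) : Nat.card (ZMod (2*m+1)) = 2*m+1 := Nat.card_zmod _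

lemma outDeg_u (m : ℕ) : outDeg (E' m) none = 2*m+1 := by
  show Nat.card {y // E' m none y} = 2*m+1
  rw [card_W (fun y => E' m none y) (fun h => h)]
  have h1 : (fun a : ZMod (2*m+1) => E' m none (some (.inl a))) = fun _ => True := rfl
  have h2 : (fun b : ZMod (2*m+1) => E' m none (some (.inr (.inl b)))) = fun _ => False := rfl
  have h3 : (fun c : Fin (m+1) => E' m none (some (.inr (.inr c)))) = fun _ => False := rfl
  rw [show Nat.card {a : ZMod (2*m+1) // E' m none (some (.inl a))}
      = Nat.card {_a : ZMod (2*m+1) // True} from rfl,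
    show Nat.card {b : ZMod (2*m+1) // E' m none (some (.inr (.inl b)))}
      = Nat.card {_b : ZMod (2*m+1) // False} from rfl,
    show Nat.card {c : Fin (m+1) // E' m none (some (.inr (.inr c)))}
      = Nat.card {_c : Fin (m+1) // False} from rfl,
    card_true, card_false, card_false, card_zm]


lemma inDeg_u (m : ℕ) : inDeg (E' m) none = 2*m+1 := by
  show Nat.card {y // E' m y none} = 2*m+1
  rw [card_W (fun y => E' m y none) (fun h => h)]
  rw [show Nat.card {a : ZMod (2*m+1) // E' m (some (.inl a)) none}
      = Nat.card {_a : ZMod (2*m+1) // False} from rfl,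
    show Nat.card {b : ZMod (2*m+1) // E' m (some (.inr (.inl b))) none}
      = Nat.card {_b : ZMod (2*m+1) // True} from rfl,
    show Nat.card {c : Fin (m+1) // E' m (some (.inr (.inr c))) none}
      = Nat.card {_c : Fin (m+1) // False} from rfl,
    card_true, card_false, card_false, card_zm]
  omega

lemma outDeg_A (m : ℕ) (i : ZMod (2*m+1)) : outDeg (E' m) (some (.inl i)) = 2*m+1 := by
  show Nat.card {y // E' m (some (.inl i)) y} = 2*m+1
  rw [card_W (fun y => E' m (some (.inl i)) y) (fun h => h)]
  rw [show Nat.card {a : ZMod (2*m+1) // E' m (some (.inl i)) (some (.inl a))}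
      = Nat.card {a // T m i a} from rfl,
    show Nat.card {b : ZMod (2*m+1) // E' m (some (.inl i)) (some (.inr (.inl b)))}
      = Nat.card {_b : ZMod (2*m+1) // False} from rfl,
    show Nat.card {c : Fin (m+1) // E' m (some (.inl i)) (some (.inr (.inr c)))}
      = Nat.card {_c : Fin (m+1) // True} from rfl,
    card_T_out, card_false, card_true, Nat.card_eq_fintype_card, Fintype.card_fin]
  omega

lemma inDeg_B (m : ℕ) (i : ZMod (2*m+1)) : inDeg (E' m) (some (.inr (.inl i))) = 2*m+1 := by
  show Nat.card {y // E' m y (some (.inr (.inl i)))} = 2*m+1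
  rw [card_W (fun y => E' m y (some (.inr (.inl i)))) (fun h => h)]
  rw [show Nat.card {a : ZMod (2*m+1) // E' m (some (.inl a)) (some (.inr (.inl i)))}
      = Nat.card {_a : ZMod (2*m+1) // False} from rfl,
    show Nat.card {b : ZMod (2*m+1) // E' m (some (.inr (.inl b))) (some (.inr (.inl i)))}
      = Nat.card {b // T m b i} from rfl,
    show Nat.card {c : Fin (m+1) // E' m (some (.inr (.inr c))) (some (.inr (.inl i)))}
      = Nat.card {_c : Fin (m+1) // True} from rfl,
    card_T_in, card_false, card_true, Nat.card_eq_fintype_card, Fintype.card_fin]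
  omega

lemma outDeg_C (m : ℕ) (k : Fin (m+1)) : outDeg (E' m) (some (.inr (.inr k))) = 2*m+1 := by
  show Nat.card {y // E' m (some (.inr (.inr k))) y} = 2*m+1
  rw [card_W (fun y => E' m (some (.inr (.inr k))) y) (fun h => h)]
  rw [show Nat.card {a : ZMod (2*m+1) // E' m (some (.inr (.inr k))) (some (.inl a))}
      = Nat.card {_a : ZMod (2*m+1) // False} from rfl,
    show Nat.card {b : ZMod (2*m+1) // E' m (some (.inr (.inr k))) (some (.inr (.inl b)))}
      = Nat.card {_b : ZMod (2*m+1) // True} from rfl,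
    show Nat.card {c : Fin (m+1) // E' m (some (.inr (.inr k))) (some (.inr (.inr c)))}
      = Nat.card {_c : Fin (m+1) // False} from rfl,
    card_true, card_false, card_false, card_zm]
  omega

lemma inDeg_C (m : ℕ) (k : Fin (m+1)) : inDeg (E' m) (some (.inr (.inr k))) = 2*m+1 := by
  show Nat.card {y // E' m y (some (.inr (.inr k)))} = 2*m+1
  rw [card_W (fun y => E' m y (some (.inr (.inr k)))) (fun h => h)]
  rw [show Nat.card {a : ZMod (2*m+1) // E' m (some (.inl a)) (some (.inr (.inr k)))}
      = Nat.card {_a : ZMod (2*m+1) // True} from rfl,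
    show Nat.card {b : ZMod (2*m+1) // E' m (some (.inr (.inl b))) (some (.inr (.inr k)))}
      = Nat.card {_b : ZMod (2*m+1) // False} from rfl,
    show Nat.card {c : Fin (m+1) // E' m (some (.inr (.inr c))) (some (.inr (.inr k)))}
      = Nat.card {_c : Fin (m+1) // False} from rfl,
    card_true, card_false, card_false, card_zm]

lemma inDeg_A_ge (m : ℕ) (i : ZMod (2*m+1)) : 2*m+1 ≤ inDeg (E' m) (some (.inl i)) := by
  show 2*m+1 ≤ Nat.card {y // E' m y (some (.inl i))}
  have hinj : Function.Injective
      (fun b : ZMod (2*m+1) =>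
        (⟨some (.inr (.inl b)), trivial⟩ : {y : W m // E' m y (some (.inl i))})) := by
    intro a b h
    simpa using congrArg Subtype.val h
  calc 2*m+1 = Nat.card (ZMod (2*m+1)) := (card_zm m).symm
    _ ≤ _ := Nat.card_le_card_of_injective _ hinj

lemma outDeg_B_ge (m : ℕ) (i : ZMod (2*m+1)) : 2*m+1 ≤ outDeg (E' m) (some (.inr (.inl i))) := by
  show 2*m+1 ≤ Nat.card {y // E' m (some (.inr (.inl i))) y}
  have hinj : Function.Injective
      (fun b : ZMod (2*m+1) =>
        (⟨some (.inl b), trivial⟩ : {y : W m // E' m (some (.inr (.inl i))) y})) := by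
    intro a b h
    simpa using congrArg Subtype.val h
  calc 2*m+1 = Nat.card (ZMod (2*m+1)) := (card_zm m).symm
    _ ≤ _ := Nat.card_le_card_of_injective _ hinj

lemma semideg (m : ℕ) (x : W m) : min (outDeg (E' m) x) (inDeg (E' m) x) = 2*m+1 := by
  rcases x with _ | (a | b | c)
  · rw [outDeg_u, inDeg_u]; omega
  · have h1 := outDeg_A m a
    have h2 := inDeg_A_ge m a
    omega
  · have h1 := inDeg_B m b
    have h2 := outDeg_B_ge m b
    omega
  · rw [outDeg_C, inDeg_C]; omega

lemma no_tri (m : ℕ) : ¬ HasCycleThrough (E' m) 3 none := by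
  rintro ⟨v, hinj, hedge, i, hi⟩
  have h1 := hedge i
  rw [hi] at h1
  have hcyc : i + 1 + 1 + 1 = i := by
    have h3 : (1 + 1 + 1 : ZMod 3) = 0 := by decide
    calc i + 1 + 1 + 1 = i + (1 + 1 + 1) := by ring
      _ = i := by rw [h3, add_zero]
  rcases hv1 : v (i + 1) with _ | (a | b | c)
  · rw [hv1] at h1; exact h1
  · have h2 := hedge (i + 1)
    rw [hv1] at h2
    have h3 := hedge (i + 1 + 1)
    rw [hcyc, hi] at h3
    rcases hv2 : v (i + 1 + 1) with _ | (a' | b' | c')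
    · rw [hv2] at h2; exact h2
    · rw [hv2] at h3; exact h3
    · rw [hv2] at h2; exact h2
    · rw [hv2] at h3; exact h3
  · rw [hv1] at h1; exact h1
  · rw [hv1] at h1; exact h1

lemma card_W_eq (m : ℕ) : Fintype.card (W m) = 5*m+4 := by
  simp only [Fintype.card_option, Fintype.card_sum, ZMod.card, Fintype.card_fin]
  omega


end NoTri

theorem extremal_example_no_triangle_through_vertex :
    ∀ N : ℕ, ∃ n, N ≤ n ∧ ∃ E : Fin n → Fin n → Prop, IsOrientedGraph E ∧
      minSemidegree E = 2 * n / 5 ∧ ∃ u : Fin n, ¬ HasCycleThrough E 3 u := by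
  intro N
  set m := N with hm
  refine ⟨5*m+4, by omega, ?_⟩
  have e : Fin (5*m+4) ≃ NoTri.W m := (Fintype.equivFinOfCardEq (NoTri.card_W_eq m)).symm
  refine ⟨fun x y => NoTri.E' m (e x) (e y), ?_, ?_, ?_⟩
  · intro x y h h'
    exact NoTri.E'_oriented m (e x) (e y) h h'
  · have hdeg : ∀ x : Fin (5*m+4),
        min (outDeg (fun x y => NoTri.E' m (e x) (e y)) x)
          (inDeg (fun x y => NoTri.E' m (e x) (e y)) x) = 2*m+1 := by
      intro x
      have hout : outDeg (fun x y => NoTri.E' m (e x) (e y)) x = outDeg (NoTri.E' m) (e x) :=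
        Nat.card_congr (e.subtypeEquiv fun y => Iff.rfl)
      have hin : inDeg (fun x y => NoTri.E' m (e x) (e y)) x = inDeg (NoTri.E' m) (e x) :=
        Nat.card_congr (e.subtypeEquiv fun y => Iff.rfl)
      rw [hout, hin, NoTri.semideg]
    have hrange : (Set.range fun x : Fin (5*m+4) =>
        min (outDeg (fun x y => NoTri.E' m (e x) (e y)) x)
          (inDeg (fun x y => NoTri.E' m (e x) (e y)) x)) = {2*m+1} := by
      ext k
      constructor
      · rintro ⟨x, rfl⟩
        exact hdeg x
      · rintro rfl
        exact ⟨⟨0, by omega⟩, hdeg _⟩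
    rw [minSemidegree, hrange, csInf_singleton]
    omega
  · refine ⟨e.symm none, ?_⟩
    rintro ⟨v, hinj, hedge, i, hi⟩
    refine NoTri.no_tri m ⟨fun j => e (v j), e.injective.comp hinj, fun j => hedge j, i, ?_⟩
    show e (v i) = none
    rw [hi, Equiv.apply_symm_apply]
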